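/- arXiv:1102.3165 — 6 statements merged into one kernel-verified Lean document; each statement's English description precedes it below -/
import Mathlib

section
/- Let w⁻, w⁺ > 0, v = (0, y, -z⁻) with z⁻ > 0, and for x ∈ ℝ let x̄ = (x, 0, z⁺) with z⁺ > 0. Define c(v,x) = inf over a ∈ {z = 0} of (w⁻·|v - a| + w⁺·|a - x̄|). Then c(v,·) is strictly increasing on x > 0. -/
/-- The point `(a, b, c)` of Euclidean 3-space. -/
noncomputable def pt3 (a b c : ℝ) : EuclideanSpace ℝ (Fin 3) := WithLp.toLp 2 ![a, b, c]

/-- The weighted distance function `c(v,x)` from `v = (0, y, -z⁻)` to `x̄ = (x, 0, z⁺)`,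
obtained by minimizing `w⁻·|v - a| + w⁺·|a - x̄|` over bending points `a` in the plane
`F = {z = 0}`. -/
noncomputable def wdist (wm wp y zm zp : ℝ) (x : ℝ) : ℝ :=
  ⨅ a : ℝ × ℝ, (wm * dist (pt3 0 y (-zm)) (pt3 a.1 a.2 0)
    + wp * dist (pt3 a.1 a.2 0) (pt3 x 0 zp))

lemma dist_pt3 (a b c d e f : ℝ) :
    dist (pt3 a b c) (pt3 d e f) = Real.sqrt ((a-d)^2+(b-e)^2+(c-f)^2) := by
  rw [EuclideanSpace.dist_eq]
  simp [pt3, Fin.sum_univ_three, Real.dist_eq, sq_abs]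

/-- The explicit objective function. -/
noncomputable def Fx (wm wp y zm zp x : ℝ) (a : ℝ × ℝ) : ℝ :=
  wm * Real.sqrt (a.1^2 + (a.2 - y)^2 + zm^2)
    + wp * Real.sqrt ((a.1 - x)^2 + a.2^2 + zp^2)

lemma wdist_eq (wm wp y zm zp x : ℝ) :
    wdist wm wp y zm zp x = ⨅ a : ℝ × ℝ, Fx wm wp y zm zp x a := by
  unfold wdist
  congr 1
  funext a
  rw [dist_pt3, dist_pt3, Fx]
  have h1 : (0 - a.1)^2 + (y - a.2)^2 + (-zm - 0)^2 = a.1^2 + (a.2 - y)^2 + zm^2 := by ring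
  have h2 : (a.1 - x)^2 + (a.2 - 0)^2 + (0 - zp)^2 = (a.1 - x)^2 + a.2^2 + zp^2 := by ring
  rw [h1, h2]

lemma Fx_nonneg (wm wp y zm zp x : ℝ) (hwm : 0 ≤ wm) (hwp : 0 ≤ wp) (a : ℝ × ℝ) :
    0 ≤ Fx wm wp y zm zp x a := by
  unfold Fx; positivity

lemma Fx_continuous (wm wp y zm zp x : ℝ) : Continuous (Fx wm wp y zm zp x) := by
  unfold Fx; fun_prop

lemma clamp_sq_le (l u t s : ℝ) (hl : l ≤ t) (hu : t ≤ u) :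
    (max l (min s u) - t)^2 ≤ (s - t)^2 := by
  rcases le_total s l with h | h
  · rw [min_eq_left (h.trans (hl.trans hu)), max_eq_left h]
    nlinarith
  · rcases le_total s u with h2 | h2
    · rw [min_eq_left h2, max_eq_right h]
    · rw [min_eq_right h2, max_eq_right (hl.trans hu)]
      nlinarith

/-- Clamping a bending point into the compact box does not increase the objective. -/
lemma Fx_clamp_le (wm wp y zm zp x : ℝ) (hwm : 0 ≤ wm) (hwp : 0 ≤ wp) (hx : 0 ≤ x)
    (b : ℝ × ℝ) :
    Fx wm wp y zm zp x (max 0 (min b.1 x), max (min 0 y) (min b.2 (max 0 y)))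
      ≤ Fx wm wp y zm zp x b := by
  have h1 : (max 0 (min b.1 x) - 0)^2 ≤ (b.1 - 0)^2 :=
    clamp_sq_le 0 x 0 b.1 le_rfl hx
  have h2 : (max 0 (min b.1 x) - x)^2 ≤ (b.1 - x)^2 :=
    clamp_sq_le 0 x x b.1 hx le_rfl
  have h3 : (max (min 0 y) (min b.2 (max 0 y)) - y)^2 ≤ (b.2 - y)^2 :=
    clamp_sq_le (min 0 y) (max 0 y) y b.2 (min_le_right 0 y) (le_max_right 0 y)
  have h4 : (max (min 0 y) (min b.2 (max 0 y)) - 0)^2 ≤ (b.2 - 0)^2 :=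
    clamp_sq_le (min 0 y) (max 0 y) 0 b.2 (min_le_left 0 y) (le_max_left 0 y)
  simp only [sub_zero] at h1 h4
  unfold Fx
  gcongr

/-- The key strict comparison: scaling the first coordinate of a bending point for `x₂`
by `x₁/x₂` gives a strictly better objective value for `x₁`. -/
lemma Fx_key (wm wp y zm zp x₁ x₂ : ℝ) (hwm : 0 < wm) (hwp : 0 < wp)
    (hzm : 0 < zm) (hzp : 0 < zp) (hx₁ : 0 < x₁) (hlt : x₁ < x₂) (a : ℝ × ℝ) :
    Fx wm wp y zm zp x₁ (x₁ / x₂ * a.1, a.2) < Fx wm wp y zm zp x₂ a := by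
  have hx₂ : 0 < x₂ := hx₁.trans hlt
  set r := x₁ / x₂ with hrdef
  have hr0 : 0 < r := div_pos hx₁ hx₂
  have hr1 : r < 1 := (div_lt_one hx₂).2 hlt
  have hrx : r * x₂ = x₁ := div_mul_cancel₀ x₁ hx₂.ne'
  have hsq : (r * a.1 - x₁)^2 = r^2 * (a.1 - x₂)^2 := by rw [← hrx]; ring
  simp only [Fx]
  by_cases h : a.1 = 0
  · apply add_lt_add_of_le_of_lt
    · apply mul_le_mul_of_nonneg_left _ hwm.le
      apply Real.sqrt_le_sqrt
      simp only [h, mul_zero]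
      linarith [sq_nonneg (0:ℝ)]
    · apply mul_lt_mul_of_pos_left _ hwp
      apply Real.sqrt_lt_sqrt (by positivity)
      rw [hsq, h]
      nlinarith [sq_nonneg x₂]
  · apply add_lt_add_of_lt_of_le
    · apply mul_lt_mul_of_pos_left _ hwm
      apply Real.sqrt_lt_sqrt (by positivity)
      have ha2 : 0 < a.1^2 := by positivity
      have hr2 : r^2 < 1 := by nlinarith
      have : (r * a.1)^2 < a.1^2 := by nlinarith
      linarith
    · apply mul_le_mul_of_nonneg_left _ hwp.le
      apply Real.sqrt_le_sqrt
      rw [hsq]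
      have hr2 : r^2 ≤ 1 := by nlinarith
      nlinarith [sq_nonneg (a.1 - x₂)]

/-- The weighted distance function `x ↦ c(v,x)` is strictly increasing for `x > 0`. -/
theorem stmt_1 (wm wp y zm zp : ℝ) (hwm : 0 < wm) (hwp : 0 < wp)
    (hzm : 0 < zm) (hzp : 0 < zp) :
    StrictMonoOn (wdist wm wp y zm zp) (Set.Ioi 0) := by
  intro x₁ hx₁ x₂ hx₂ hlt
  simp only [Set.mem_Ioi] at hx₁ hx₂
  rw [wdist_eq, wdist_eq]
  set F₂ := Fx wm wp y zm zp x₂ with hF₂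
  set F₁ := Fx wm wp y zm zp x₁ with hF₁
  -- the objective for x₂ attains its minimum on a compact box
  have hKco : IsCompact ((Set.Icc (0:ℝ) x₂) ×ˢ (Set.Icc (min 0 y) (max 0 y))) :=
    isCompact_Icc.prod isCompact_Icc
  have hKne : ((0:ℝ), (0:ℝ)) ∈ (Set.Icc (0:ℝ) x₂) ×ˢ (Set.Icc (min 0 y) (max 0 y)) :=
    ⟨⟨le_rfl, hx₂.le⟩, ⟨min_le_left 0 y, le_max_left 0 y⟩⟩
  obtain ⟨a, haK, ha⟩ := hKco.exists_isMinOn ⟨_, hKne⟩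
    (Fx_continuous wm wp y zm zp x₂).continuousOn
  have hmin : ∀ b : ℝ × ℝ, F₂ a ≤ F₂ b := by
    intro b
    have hmem : ((max 0 (min b.1 x₂), max (min 0 y) (min b.2 (max 0 y))) : ℝ × ℝ)
        ∈ (Set.Icc (0:ℝ) x₂) ×ˢ (Set.Icc (min 0 y) (max 0 y)) := by
      refine ⟨⟨le_max_left _ _, max_le hx₂.le (min_le_right _ _)⟩,
        ⟨le_max_left _ _, max_le ((min_le_left 0 y).trans (le_max_left 0 y))
          (min_le_right _ _)⟩⟩
    exact (ha hmem).trans (Fx_clamp_le wm wp y zm zp x₂ hwm.le hwp.le hx₂.le b)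
  have h2 : (⨅ b, F₂ b) = F₂ a := by
    refine le_antisymm (ciInf_le ⟨F₂ a, ?_⟩ a) (le_ciInf hmin)
    rintro t ⟨b, rfl⟩
    exact hmin b
  rw [h2]
  have hb : (⨅ b, F₁ b) ≤ F₁ (x₁ / x₂ * a.1, a.2) := by
    refine ciInf_le ⟨0, ?_⟩ _
    rintro t ⟨b, rfl⟩
    exact Fx_nonneg wm wp y zm zp x₁ hwm.le hwp.le b
  exact lt_of_le_of_lt hb (Fx_key wm wp y zm zp x₁ x₂ hwm hwp hzm hzp hx₁ hlt a)
end

section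
/- Let w⁻, w⁺ > 0, v = (0, y, -z⁻) with z⁻ > 0, and for x ∈ ℝ let x̄ = (x, 0, z⁺) with z⁺ > 0. Define c(v,x) = inf over a ∈ {z = 0} of (w⁻·|v - a| + w⁺·|a - x̄|). Then c(v,·) : ℝ → ℝ is convex. More precisely, for any x₁ < x₀ < x₂ with 2x₀ = x₁ + x₂, the second finite difference c(v,x₁) - 2c(v,x₀) + c(v,x₂) is nonnegative (and strictly positive when w⁻ ≠ w⁺). -/
open Filter

/-- The integrand of `wdist`. -/
noncomputable def wfun (wm wp y zm zp x : ℝ) (a : ℝ × ℝ) : ℝ :=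
  wm * dist (pt3 0 y (-zm)) (pt3 a.1 a.2 0) + wp * dist (pt3 a.1 a.2 0) (pt3 x 0 zp)

lemma wfun_nonneg (wm wp y zm zp x : ℝ) (hwm : 0 < wm) (hwp : 0 < wp) (a : ℝ × ℝ) :
    0 ≤ wfun wm wp y zm zp x a := by
  unfold wfun; positivity

lemma cont_pt3 : Continuous (fun a : ℝ × ℝ => pt3 a.1 a.2 0) := by
  have : Continuous (fun a : ℝ × ℝ => (![a.1, a.2, 0] : Fin 3 → ℝ)) := by
    apply continuous_pi
    intro i
    fin_cases i <;> simp <;> fun_prop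
  exact (PiLp.continuous_toLp 2 (fun _ : Fin 3 => ℝ)).comp this

lemma norm_pt3_ge (a : ℝ × ℝ) : ‖a‖ ≤ ‖pt3 a.1 a.2 0‖ := by
  rw [Prod.norm_def]
  have h : ∀ (u : EuclideanSpace ℝ (Fin 3)), ‖u‖ = Real.sqrt (u 0 ^2 + u 1 ^2 + u 2 ^2) := by
    intro u
    rw [EuclideanSpace.norm_eq]
    simp [Fin.sum_univ_three, Real.norm_eq_abs, sq_abs]
  rw [h]
  have h1 : ‖a.1‖ ≤ Real.sqrt ((pt3 a.1 a.2 0) 0 ^2 + (pt3 a.1 a.2 0) 1 ^2 + (pt3 a.1 a.2 0) 2 ^2) := by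
    rw [show ((pt3 a.1 a.2 0) 0) = a.1 from rfl, show ((pt3 a.1 a.2 0) 1) = a.2 from rfl,
      show ((pt3 a.1 a.2 0) 2) = 0 from rfl]
    rw [Real.norm_eq_abs, ← Real.sqrt_sq_eq_abs]
    apply Real.sqrt_le_sqrt; nlinarith [sq_nonneg a.2]
  have h2 : ‖a.2‖ ≤ Real.sqrt ((pt3 a.1 a.2 0) 0 ^2 + (pt3 a.1 a.2 0) 1 ^2 + (pt3 a.1 a.2 0) 2 ^2) := by
    rw [show ((pt3 a.1 a.2 0) 0) = a.1 from rfl, show ((pt3 a.1 a.2 0) 1) = a.2 from rfl,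
      show ((pt3 a.1 a.2 0) 2) = 0 from rfl]
    rw [Real.norm_eq_abs, ← Real.sqrt_sq_eq_abs]
    apply Real.sqrt_le_sqrt; nlinarith [sq_nonneg a.1]
  exact max_le h1 h2

lemma exists_min (wm wp y zm zp x : ℝ) (hwm : 0 < wm) (hwp : 0 < wp) :
    ∃ m : ℝ × ℝ, ∀ b : ℝ × ℝ, wfun wm wp y zm zp x m ≤ wfun wm wp y zm zp x b := by
  set f : ℝ × ℝ → ℝ := wfun wm wp y zm zp x with hf
  have hcont : Continuous f := by
    apply Continuous.add
    · exact continuous_const.mul (continuous_const.dist cont_pt3)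
    · exact continuous_const.mul (cont_pt3.dist continuous_const)
  have hlb : ∀ a, wm * ‖a‖ - wm * ‖pt3 0 y (-zm)‖ ≤ f a := by
    intro a
    have h1 : ‖a‖ - ‖pt3 0 y (-zm)‖ ≤ dist (pt3 0 y (-zm)) (pt3 a.1 a.2 0) := by
      have := norm_pt3_ge a
      have h2 : ‖pt3 a.1 a.2 0‖ - ‖pt3 0 y (-zm)‖ ≤ ‖pt3 a.1 a.2 0 - pt3 0 y (-zm)‖ := by
        have := norm_sub_norm_le (pt3 a.1 a.2 0) (pt3 0 y (-zm)); linarith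
      rw [dist_eq_norm, show pt3 0 y (-zm) - pt3 a.1 a.2 0 = -(pt3 a.1 a.2 0 - pt3 0 y (-zm)) by abel, norm_neg]
      linarith
    have h3 : 0 ≤ wp * dist (pt3 a.1 a.2 0) (pt3 x 0 zp) := by positivity
    have h4 := mul_le_mul_of_nonneg_left h1 hwm.le
    rw [mul_sub] at h4
    show _ ≤ wm * dist (pt3 0 y (-zm)) (pt3 a.1 a.2 0) + wp * dist (pt3 a.1 a.2 0) (pt3 x 0 zp)
    linarith
  have hlim : Tendsto f (cocompact (ℝ × ℝ)) atTop := by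
    apply tendsto_atTop_mono hlb
    apply tendsto_atTop_add_const_right
    exact (tendsto_norm_cocompact_atTop).const_mul_atTop hwm
  exact hcont.exists_forall_le hlim

lemma wdist_eq_wfun_min (wm wp y zm zp x : ℝ) (hwm : 0 < wm) (hwp : 0 < wp) :
    ∃ m : ℝ × ℝ, wdist wm wp y zm zp x = wfun wm wp y zm zp x m ∧
      ∀ b : ℝ × ℝ, wfun wm wp y zm zp x m ≤ wfun wm wp y zm zp x b := by
  obtain ⟨m, hm⟩ := exists_min wm wp y zm zp x hwm hwp
  refine ⟨m, le_antisymm ?_ (le_ciInf hm), hm⟩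
  exact ciInf_le ⟨0, by rintro _ ⟨a, rfl⟩; exact wfun_nonneg wm wp y zm zp x hwm hwp a⟩ m

lemma sameRay_eq_of_last {u v : EuclideanSpace ℝ (Fin 3)} (hz : u 2 = v 2) (h0 : u 2 ≠ 0)
    (h : SameRay ℝ u v) : u = v := by
  have hu : u ≠ 0 := by intro h'; apply h0; rw [h']; rfl
  have hv : v ≠ 0 := by intro h'; apply h0; rw [hz, h']; rfl
  obtain ⟨r, s, hr, hs, hrs⟩ := h.exists_pos hu hv
  have h2 : r * u 2 = s * v 2 := congrArg (fun w : EuclideanSpace ℝ (Fin 3) => w 2) hrs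
  rw [← hz] at h2
  have hrs' : r = s := mul_right_cancel₀ h0 h2
  subst hrs'
  exact smul_right_injective _ hr.ne' hrs

lemma mid_lt (wm wp y zm zp x₁ x₂ : ℝ) (hwm : 0 < wm) (hwp : 0 < wp)
    (hzm : 0 < zm) (hzp : 0 < zp) (hx : x₁ ≠ x₂) (a b : ℝ × ℝ) :
    wfun wm wp y zm zp ((x₁ + x₂)/2) ((a.1+b.1)/2, (a.2+b.2)/2)
      < (wfun wm wp y zm zp x₁ a + wfun wm wp y zm zp x₂ b) / 2 := by
  set p : EuclideanSpace ℝ (Fin 3) := pt3 0 y (-zm) - pt3 a.1 a.2 0 with hp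
  set p' : EuclideanSpace ℝ (Fin 3) := pt3 0 y (-zm) - pt3 b.1 b.2 0 with hp'
  set q : EuclideanSpace ℝ (Fin 3) := pt3 a.1 a.2 0 - pt3 x₁ 0 zp with hq
  set q' : EuclideanSpace ℝ (Fin 3) := pt3 b.1 b.2 0 - pt3 x₂ 0 zp with hq'
  have hA : pt3 0 y (-zm) - pt3 ((a.1+b.1)/2) ((a.2+b.2)/2) 0 = (1/2 : ℝ) • (p + p') := by
    rw [hp, hp']; ext i; fin_cases i <;> simp [pt3] <;> ring
  have hB : pt3 ((a.1+b.1)/2) ((a.2+b.2)/2) 0 - pt3 ((x₁+x₂)/2) 0 zp = (1/2 : ℝ) • (q + q') := by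
    rw [hq, hq']; ext i; fin_cases i <;> simp [pt3] <;> ring
  have hcase : ¬ SameRay ℝ p p' ∨ ¬ SameRay ℝ q q' := by
    by_contra hc
    push_neg at hc
    obtain ⟨h1, h2⟩ := hc
    have hp2 : p 2 = p' 2 := rfl
    have hp0 : p 2 ≠ 0 := by
      show (-zm) - 0 ≠ 0
      simp; linarith
    have hpp : p = p' := sameRay_eq_of_last hp2 hp0 h1
    have ha1 : a.1 = b.1 := by
      have := congrArg (fun w : EuclideanSpace ℝ (Fin 3) => w 0) hpp
      have h0 : (0:ℝ) - a.1 = 0 - b.1 := this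
      linarith
    have hq2 : q 2 = q' 2 := rfl
    have hq0 : q 2 ≠ 0 := by
      show (0:ℝ) - zp ≠ 0
      simp; linarith
    have hqq : q = q' := sameRay_eq_of_last hq2 hq0 h2
    have : a.1 - x₁ = b.1 - x₂ := congrArg (fun w : EuclideanSpace ℝ (Fin 3) => w 0) hqq
    apply hx; linarith
  have hd1 : dist (pt3 0 y (-zm)) (pt3 ((a.1+b.1)/2) ((a.2+b.2)/2) 0) = (1/2) * ‖p + p'‖ := by
    rw [dist_eq_norm, hA, norm_smul, Real.norm_eq_abs]
    norm_num
  have hd2 : dist (pt3 ((a.1+b.1)/2) ((a.2+b.2)/2) 0) (pt3 ((x₁+x₂)/2) 0 zp) = (1/2) * ‖q + q'‖ := by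
    rw [dist_eq_norm, hB, norm_smul, Real.norm_eq_abs]
    norm_num
  have e1 : dist (pt3 0 y (-zm)) (pt3 a.1 a.2 0) = ‖p‖ := by rw [dist_eq_norm]
  have e2 : dist (pt3 0 y (-zm)) (pt3 b.1 b.2 0) = ‖p'‖ := by rw [dist_eq_norm]
  have e3 : dist (pt3 a.1 a.2 0) (pt3 x₁ 0 zp) = ‖q‖ := by rw [dist_eq_norm]
  have e4 : dist (pt3 b.1 b.2 0) (pt3 x₂ 0 zp) = ‖q'‖ := by rw [dist_eq_norm]
  show wm * dist (pt3 0 y (-zm)) (pt3 ((a.1+b.1)/2) ((a.2+b.2)/2) 0)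
      + wp * dist (pt3 ((a.1+b.1)/2) ((a.2+b.2)/2) 0) (pt3 ((x₁+x₂)/2) 0 zp)
    < ((wm * dist (pt3 0 y (-zm)) (pt3 a.1 a.2 0) + wp * dist (pt3 a.1 a.2 0) (pt3 x₁ 0 zp))
      + (wm * dist (pt3 0 y (-zm)) (pt3 b.1 b.2 0) + wp * dist (pt3 b.1 b.2 0) (pt3 x₂ 0 zp))) / 2
  rw [hd1, hd2, e1, e2, e3, e4]
  rcases hcase with hc | hc
  · have hs : ‖p + p'‖ < ‖p‖ + ‖p'‖ := norm_add_lt_of_not_sameRay hc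
    have ht : ‖q + q'‖ ≤ ‖q‖ + ‖q'‖ := norm_add_le q q'
    nlinarith
  · have hs : ‖q + q'‖ < ‖q‖ + ‖q'‖ := norm_add_lt_of_not_sameRay hc
    have ht : ‖p + p'‖ ≤ ‖p‖ + ‖p'‖ := norm_add_le p p'
    nlinarith

lemma comb_le (wm wp y zm zp x₁ x₂ t s : ℝ) (hwm : 0 < wm) (hwp : 0 < wp)
    (ht : 0 ≤ t) (hs : 0 ≤ s) (hts : t + s = 1) (a b : ℝ × ℝ) :
    wfun wm wp y zm zp (t*x₁ + s*x₂) (t*a.1 + s*b.1, t*a.2 + s*b.2)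
      ≤ t * wfun wm wp y zm zp x₁ a + s * wfun wm wp y zm zp x₂ b := by
  have hs1 : s = 1 - t := by linarith
  subst hs1
  set p : EuclideanSpace ℝ (Fin 3) := pt3 0 y (-zm) - pt3 a.1 a.2 0 with hp
  set p' : EuclideanSpace ℝ (Fin 3) := pt3 0 y (-zm) - pt3 b.1 b.2 0 with hp'
  set q : EuclideanSpace ℝ (Fin 3) := pt3 a.1 a.2 0 - pt3 x₁ 0 zp with hq
  set q' : EuclideanSpace ℝ (Fin 3) := pt3 b.1 b.2 0 - pt3 x₂ 0 zp with hq'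
  have hA : pt3 0 y (-zm) - pt3 (t*a.1 + (1-t)*b.1) (t*a.2 + (1-t)*b.2) 0
      = t • p + (1-t) • p' := by
    rw [hp, hp']; ext i; fin_cases i <;> simp [pt3] <;> ring
  have hB : pt3 (t*a.1 + (1-t)*b.1) (t*a.2 + (1-t)*b.2) 0 - pt3 (t*x₁ + (1-t)*x₂) 0 zp
      = t • q + (1-t) • q' := by
    rw [hq, hq']; ext i; fin_cases i <;> simp [pt3] <;> ring
  have hnA : ‖t • p + (1-t) • p'‖ ≤ t * ‖p‖ + (1-t) * ‖p'‖ := by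
    calc ‖t • p + (1-t) • p'‖ ≤ ‖t • p‖ + ‖(1-t) • p'‖ := norm_add_le _ _
    _ = t * ‖p‖ + (1-t) * ‖p'‖ := by
        rw [norm_smul, norm_smul, Real.norm_eq_abs, Real.norm_eq_abs,
          abs_of_nonneg ht, abs_of_nonneg (by linarith : (0:ℝ) ≤ 1 - t)]
  have hnB : ‖t • q + (1-t) • q'‖ ≤ t * ‖q‖ + (1-t) * ‖q'‖ := by
    calc ‖t • q + (1-t) • q'‖ ≤ ‖t • q‖ + ‖(1-t) • q'‖ := norm_add_le _ _
    _ = t * ‖q‖ + (1-t) * ‖q'‖ := by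
        rw [norm_smul, norm_smul, Real.norm_eq_abs, Real.norm_eq_abs,
          abs_of_nonneg ht, abs_of_nonneg (by linarith : (0:ℝ) ≤ 1 - t)]
  show wm * dist (pt3 0 y (-zm)) (pt3 (t*a.1 + (1-t)*b.1) (t*a.2 + (1-t)*b.2) 0)
      + wp * dist (pt3 (t*a.1 + (1-t)*b.1) (t*a.2 + (1-t)*b.2) 0) (pt3 (t*x₁ + (1-t)*x₂) 0 zp)
    ≤ t * (wm * dist (pt3 0 y (-zm)) (pt3 a.1 a.2 0) + wp * dist (pt3 a.1 a.2 0) (pt3 x₁ 0 zp))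
      + (1-t) * (wm * dist (pt3 0 y (-zm)) (pt3 b.1 b.2 0) + wp * dist (pt3 b.1 b.2 0) (pt3 x₂ 0 zp))
  rw [dist_eq_norm, dist_eq_norm, hA, hB,
    show dist (pt3 0 y (-zm)) (pt3 a.1 a.2 0) = ‖p‖ from dist_eq_norm _ _,
    show dist (pt3 0 y (-zm)) (pt3 b.1 b.2 0) = ‖p'‖ from dist_eq_norm _ _,
    show dist (pt3 a.1 a.2 0) (pt3 x₁ 0 zp) = ‖q‖ from dist_eq_norm _ _,
    show dist (pt3 b.1 b.2 0) (pt3 x₂ 0 zp) = ‖q'‖ from dist_eq_norm _ _]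
  nlinarith

lemma wdist_strict_mid (wm wp y zm zp x₁ x₂ : ℝ) (hwm : 0 < wm) (hwp : 0 < wp)
    (hzm : 0 < zm) (hzp : 0 < zp) (hx : x₁ ≠ x₂) :
    2 * wdist wm wp y zm zp ((x₁ + x₂)/2) < wdist wm wp y zm zp x₁ + wdist wm wp y zm zp x₂ := by
  obtain ⟨a, ha1, _⟩ := wdist_eq_wfun_min wm wp y zm zp x₁ hwm hwp
  obtain ⟨b, hb1, _⟩ := wdist_eq_wfun_min wm wp y zm zp x₂ hwm hwp
  have h1 : wdist wm wp y zm zp ((x₁ + x₂)/2)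
      ≤ wfun wm wp y zm zp ((x₁ + x₂)/2) ((a.1+b.1)/2, (a.2+b.2)/2) :=
    ciInf_le ⟨0, by rintro _ ⟨c, rfl⟩; exact wfun_nonneg wm wp y zm zp _ hwm hwp c⟩ _
  have h2 := mid_lt wm wp y zm zp x₁ x₂ hwm hwp hzm hzp hx a b
  rw [← ha1, ← hb1] at h2
  linarith

/-- The weighted distance function `x ↦ c(v,x)` is convex; more precisely the second finite
difference over any triple of equidistant points is nonnegative, and strictly positive when
`w⁻ ≠ w⁺`. -/
theorem stmt_2 (wm wp y zm zp : ℝ) (hwm : 0 < wm) (hwp : 0 < wp)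
    (hzm : 0 < zm) (hzp : 0 < zp) :
    ConvexOn ℝ Set.univ (wdist wm wp y zm zp) ∧
    ∀ x₁ x₀ x₂ : ℝ, x₁ < x₀ → x₀ < x₂ → 2 * x₀ = x₁ + x₂ →
      (0 ≤ wdist wm wp y zm zp x₁ - 2 * wdist wm wp y zm zp x₀ + wdist wm wp y zm zp x₂ ∧
        (wm ≠ wp →
          0 < wdist wm wp y zm zp x₁ - 2 * wdist wm wp y zm zp x₀ + wdist wm wp y zm zp x₂)) := by
  constructor
  · refine ⟨convex_univ, ?_⟩
    intro x₁ _ x₂ _ t s ht hs hts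
    obtain ⟨a, ha1, _⟩ := wdist_eq_wfun_min wm wp y zm zp x₁ hwm hwp
    obtain ⟨b, hb1, _⟩ := wdist_eq_wfun_min wm wp y zm zp x₂ hwm hwp
    have h1 : wdist wm wp y zm zp (t*x₁ + s*x₂)
        ≤ wfun wm wp y zm zp (t*x₁ + s*x₂) (t*a.1 + s*b.1, t*a.2 + s*b.2) :=
      ciInf_le ⟨0, by rintro _ ⟨c, rfl⟩; exact wfun_nonneg wm wp y zm zp _ hwm hwp c⟩ _
    have h2 := comb_le wm wp y zm zp x₁ x₂ t s hwm hwp ht hs hts a b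
    have : wdist wm wp y zm zp (t*x₁ + s*x₂)
        ≤ t * wdist wm wp y zm zp x₁ + s * wdist wm wp y zm zp x₂ := by
      rw [ha1, hb1]; linarith
    simpa [smul_eq_mul] using this
  · intro x₁ x₀ x₂ h1 h2 h3
    have hx0 : x₀ = (x₁ + x₂)/2 := by linarith
    have hne : x₁ ≠ x₂ := by linarith
    have := wdist_strict_mid wm wp y zm zp x₁ x₂ hwm hwp hzm hzp hne
    rw [← hx0] at this
    exact ⟨by linarith, fun _ => by linarith⟩
end

section
/- Let w⁻ > w⁺ > 0 and let φ* ∈ (0, π/2) satisfy sin φ* = w⁺/w⁻. Let c(v,x) be the weighted distance function from v = (0, y, -z⁻) to (x, 0, z⁺) across the weighted plane F = {z = 0}, i.e. c(v,x) = inf over a ∈ F of (w⁻·|v-a| + w⁺·|a-(x,0,z⁺)|). Then c(v,x) - w⁺·(z⁻·cot φ* + x) → 0 as x → +∞. -/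
/-- Cauchy–Schwarz style bound. -/
lemma cs_bound (s c a z : ℝ) (hsc : s^2 + c^2 = 1) :
    s * a + c * z ≤ Real.sqrt (a^2 + z^2) := by
  have h1 := Real.sq_sqrt (by positivity : (0:ℝ) ≤ a^2 + z^2)
  have h2 := Real.sqrt_nonneg (a^2 + z^2)
  nlinarith [sq_nonneg (c*a - s*z), sq_nonneg (Real.sqrt (a^2+z^2) + (s*a + c*z))]

lemma sqrt_sub_tendsto (C : ℝ) (hC : 0 ≤ C) :
    Filter.Tendsto (fun x => Real.sqrt (x^2 + C) - x) Filter.atTop (nhds 0) := by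
  have hdiv : Filter.Tendsto (fun x : ℝ => C / x) Filter.atTop (nhds 0) := by
    simpa using Filter.Tendsto.div_atTop (tendsto_const_nhds (x := C)) Filter.tendsto_id
  apply tendsto_of_tendsto_of_tendsto_of_le_of_le' tendsto_const_nhds hdiv
  · filter_upwards [Filter.eventually_ge_atTop (1:ℝ)] with x hx
    have hx0 : (0:ℝ) ≤ x := by linarith
    have : x = Real.sqrt (x^2) := (Real.sqrt_sq hx0).symm
    nlinarith [Real.sqrt_le_sqrt (by linarith : x^2 ≤ x^2 + C)]
  · filter_upwards [Filter.eventually_ge_atTop (1:ℝ)] with x hx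
    have hx0 : (0:ℝ) < x := by linarith
    have hrhs : (0:ℝ) ≤ x + C / x := by positivity
    have h1 : x^2 + C ≤ (x + C/x)^2 := by
      have h2 : (x + C/x)^2 = x^2 + 2*C + (C/x)^2 := by field_simp; ring
      nlinarith [sq_nonneg (C/x)]
    have := Real.sqrt_le_sqrt h1
    rw [Real.sqrt_sq hrhs] at this
    linarith

set_option maxHeartbeats 1000000 in
/-- If `w⁻ > w⁺ > 0` and `φ*` is the critical angle with `sin φ* = w⁺/w⁻`, then
`c(v,x) - w⁺·(z⁻·cot φ* + x) → 0` as `x → +∞`. -/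
theorem stmt_3 (wm wp y zm zp φ : ℝ) (hwp : 0 < wp) (hw : wp < wm)
    (hzm : 0 < zm) (hzp : 0 < zp)
    (hφ : φ ∈ Set.Ioo 0 (Real.pi / 2)) (hsin : Real.sin φ = wp / wm) :
    Filter.Tendsto
      (fun x => wdist wm wp y zm zp x - wp * (zm * (Real.cos φ / Real.sin φ) + x))
      Filter.atTop (nhds 0) := by
  obtain ⟨hφ0, hφ2⟩ := hφ
  have hwm : (0:ℝ) < wm := lt_trans hwp hw
  set s := Real.sin φ with hs_def
  set c := Real.cos φ with hc_def
  have hs : 0 < s := Real.sin_pos_of_pos_of_lt_pi hφ0 (by linarith [Real.pi_pos])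
  have hc : 0 < c := Real.cos_pos_of_mem_Ioo ⟨by linarith [Real.pi_pos], hφ2⟩
  have hsc : s^2 + c^2 = 1 := Real.sin_sq_add_cos_sq φ
  have hms : wm * s = wp := by rw [hsin]; field_simp
  have hwc : wm * c = wp * (c/s) := by
    field_simp
    linear_combination hms
  -- the asymptotic bending point abscissa
  set t := zm * s / c with ht_def
  -- lower bound for every bending point
  have hlow : ∀ x : ℝ, wp * (zm * (c / s) + x) ≤ wdist wm wp y zm zp x := by
    intro x
    apply le_ciInf
    rintro ⟨a1, a2⟩
    simp only [wdist, dist_pt3]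
    have h1 : Real.sqrt (a1^2 + zm^2) ≤ Real.sqrt ((0-a1)^2 + (y-a2)^2 + (-zm-0)^2) := by
      apply Real.sqrt_le_sqrt; nlinarith [sq_nonneg (y - a2)]
    have h2 : s * a1 + c * zm ≤ Real.sqrt (a1^2 + zm^2) := cs_bound s c a1 zm hsc
    have h3 : x - a1 ≤ Real.sqrt ((a1-x)^2 + (a2-0)^2 + (0-zp)^2) := by
      have hax : x - a1 ≤ |a1 - x| := by
        rcases le_or_gt a1 x with h | h
        · rw [abs_of_nonpos (by linarith)]; linarith
        · calc x - a1 ≤ 0 := by linarith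
            _ ≤ |a1 - x| := abs_nonneg _
      calc x - a1 ≤ |a1 - x| := hax
        _ = Real.sqrt ((a1-x)^2) := (Real.sqrt_sq_eq_abs _).symm
        _ ≤ _ := Real.sqrt_le_sqrt (by nlinarith [sq_nonneg (a2-0), sq_nonneg zp])
    have key : wp * a1 + wp * (zm * (c/s)) ≤ wm * Real.sqrt ((0-a1)^2 + (y-a2)^2 + (-zm-0)^2) := by
      have hstep : wm * (s * a1 + c * zm) ≤ wm * Real.sqrt (a1^2 + zm^2) :=
        mul_le_mul_of_nonneg_left h2 (le_of_lt hwm)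
      have heq : wm * (s * a1 + c * zm) = wp * a1 + wp * (zm * (c/s)) := by
        linear_combination a1 * hms + zm * hwc
      nlinarith [mul_le_mul_of_nonneg_left h1 (le_of_lt hwm)]
    have h4 := mul_le_mul_of_nonneg_left h3 (le_of_lt hwp)
    nlinarith [key, h4]
  -- upper bound: take the bending point (t, y)
  have hup : ∀ x : ℝ, wdist wm wp y zm zp x ≤
      wp * (zm * (c/s)) + wp * t + wp * Real.sqrt ((x-t)^2 + (y^2 + zp^2)) := by
    intro x
    have hbdd : BddBelow (Set.range fun a : ℝ × ℝ =>
        wm * dist (pt3 0 y (-zm)) (pt3 a.1 a.2 0) + wp * dist (pt3 a.1 a.2 0) (pt3 x 0 zp)) := by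
      refine ⟨0, ?_⟩
      rintro _ ⟨a, rfl⟩
      positivity
    calc wdist wm wp y zm zp x ≤
        wm * dist (pt3 0 y (-zm)) (pt3 t y 0) + wp * dist (pt3 t y 0) (pt3 x 0 zp) :=
          ciInf_le hbdd (t, y)
      _ = wm * Real.sqrt ((0-t)^2 + (y-y)^2 + (-zm-0)^2)
          + wp * Real.sqrt ((t-x)^2 + (y-0)^2 + (0-zp)^2) := by rw [dist_pt3, dist_pt3]
      _ = wp * (zm * (c/s)) + wp * t + wp * Real.sqrt ((x-t)^2 + (y^2 + zp^2)) := by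
          have e1 : (0-t)^2 + (y-y)^2 + (-zm-0)^2 = (zm/c)^2 := by
            rw [ht_def]; field_simp; linear_combination zm^2 * hsc
          have e2 : Real.sqrt ((zm/c)^2) = zm / c := Real.sqrt_sq (by positivity)
          have e3 : wm * (zm / c) = wp * (zm * (c/s)) + wp * t := by
            rw [ht_def]; field_simp
            linear_combination hms - wp * hsc
          have e4 : (t-x)^2 + (y-0)^2 + (0-zp)^2 = (x-t)^2 + (y^2 + zp^2) := by ring
          rw [e1, e2, e4, e3]
  -- squeeze
  have hC : (0:ℝ) ≤ y^2 + zp^2 := by positivity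
  have htend : Filter.Tendsto (fun x : ℝ => wp * (Real.sqrt ((x-t)^2 + (y^2+zp^2)) - (x-t)))
      Filter.atTop (nhds 0) := by
    have h1 : Filter.Tendsto (fun x : ℝ => x - t) Filter.atTop Filter.atTop :=
      Filter.tendsto_atTop_add_const_right Filter.atTop (-t) Filter.tendsto_id
    have h2 := (sqrt_sub_tendsto (y^2+zp^2) hC).comp h1
    simpa using h2.const_mul wp
  apply tendsto_of_tendsto_of_tendsto_of_le_of_le' tendsto_const_nhds htend
  · filter_upwards with x
    linarith [hlow x]
  · filter_upwards with x
    have h := hup x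
    have hident : wp * (zm * (c/s)) + wp * t + wp * Real.sqrt ((x-t)^2 + (y^2 + zp^2))
        - wp * (zm * (c/s) + x) = wp * (Real.sqrt ((x-t)^2 + (y^2+zp^2)) - (x-t)) := by ring
    linarith [h, hident.le]
end

section
/- Let θ, θ₁, θ₂ be the angles of a (nondegenerate) triangle with vertices q, x₁, x₂ at q, x₁, x₂ respectively. Then |x₁ - q| + |q - x₂| = (1 + (2·sin(θ₁/2)·sin(θ₂/2))/sin(θ/2)) · |x₁ - x₂|. -/
open EuclideanGeometry

lemma key_area {E : Type*} [NormedAddCommGroup E] [InnerProductSpace ℝ E] (u v : E) :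
    Real.sin (InnerProductGeometry.angle (-u) (v - u)) * (‖u‖ * ‖v - u‖) =
      Real.sin (InnerProductGeometry.angle u v) * (‖u‖ * ‖v‖) := by
  rw [show ‖u‖ * ‖v - u‖ = ‖-u‖ * ‖v - u‖ by rw [norm_neg],
    InnerProductGeometry.sin_angle_mul_norm_mul_norm,
    InnerProductGeometry.sin_angle_mul_norm_mul_norm]
  congr 1
  simp only [inner_neg_neg, inner_neg_left, inner_neg_right, inner_sub_left, inner_sub_right]
  rw [real_inner_comm v u]
  ring

lemma trig_aux (θ θ₁ θ₂ : ℝ) (hsum : θ + θ₁ + θ₂ = Real.pi) (h0 : 0 < θ) (hπ : θ < Real.pi) :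
    Real.sin θ₁ + Real.sin θ₂ =
      Real.sin θ * (1 + 2 * Real.sin (θ₁/2) * Real.sin (θ₂/2) / Real.sin (θ/2)) := by
  have hs : 0 < Real.sin (θ/2) := Real.sin_pos_of_pos_of_lt_pi (by linarith) (by linarith)
  have h1 : Real.sin θ = 2 * Real.sin (θ/2) * Real.cos (θ/2) := by
    rw [← Real.sin_two_mul]; ring_nf
  rw [h1]
  rw [show (2 * Real.sin (θ/2) * Real.cos (θ/2)) * (1 + 2 * Real.sin (θ₁/2) * Real.sin (θ₂/2) / Real.sin (θ/2))
      = 2 * Real.sin (θ/2) * Real.cos (θ/2) + 4 * Real.cos (θ/2) * Real.sin (θ₁/2) * Real.sin (θ₂/2) by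
    field_simp; ring]
  have h2 : θ/2 = Real.pi/2 - (θ₁/2 + θ₂/2) := by linarith
  rw [h2, Real.sin_pi_div_two_sub, Real.cos_pi_div_two_sub]
  have e1 : Real.sin θ₁ = 2 * Real.sin (θ₁/2) * Real.cos (θ₁/2) := by
    rw [← Real.sin_two_mul]; ring_nf
  have e2 : Real.sin θ₂ = 2 * Real.sin (θ₂/2) * Real.cos (θ₂/2) := by
    rw [← Real.sin_two_mul]; ring_nf
  rw [e1, e2, Real.sin_add, Real.cos_add]
  linear_combination (-2*Real.sin (θ₁/2)*Real.cos (θ₁/2))*(Real.sin_sq_add_cos_sq (θ₂/2)) +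
    (-2*Real.sin (θ₂/2)*Real.cos (θ₂/2))*(Real.sin_sq_add_cos_sq (θ₁/2))

/-- In any nondegenerate triangle `q x₁ x₂` with angles `θ = ∠ x₁ q x₂`, `θ₁ = ∠ q x₁ x₂`,
`θ₂ = ∠ q x₂ x₁`, one has
`|x₁ - q| + |q - x₂| = (1 + 2·sin(θ₁/2)·sin(θ₂/2)/sin(θ/2)) · |x₁ - x₂|`. -/
theorem stmt_6 (q x₁ x₂ : EuclideanSpace ℝ (Fin 3))
    (h : ¬ Collinear ℝ ({q, x₁, x₂} : Set (EuclideanSpace ℝ (Fin 3)))) :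
    dist x₁ q + dist q x₂ =
      (1 + 2 * Real.sin (∠ q x₁ x₂ / 2) * Real.sin (∠ q x₂ x₁ / 2) /
        Real.sin (∠ x₁ q x₂ / 2)) * dist x₁ x₂ := by
  have hperm1 : ¬ Collinear ℝ ({x₁, q, x₂} : Set (EuclideanSpace ℝ (Fin 3))) := by
    rwa [Set.insert_comm]
  have hsθ : 0 < Real.sin (∠ x₁ q x₂) := sin_pos_of_not_collinear hperm1
  have hθ0 : 0 < ∠ x₁ q x₂ := angle_pos_of_not_collinear hperm1
  have hθπ : ∠ x₁ q x₂ < Real.pi := angle_lt_pi_of_not_collinear hperm1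
  have hne1 : x₁ ≠ q := by
    intro he; apply h; rw [he]; simpa [Set.insert_comm] using collinear_pair ℝ q x₂
  have hne2 : x₂ ≠ q := by
    intro he; apply h; rw [he]
    simpa [Set.insert_comm, Set.pair_comm] using collinear_pair ℝ q x₁
  have hsum : ∠ q x₁ x₂ + ∠ x₁ x₂ q + ∠ x₂ q x₁ = Real.pi :=
    angle_add_angle_add_angle_eq_pi x₂ hne1
  rw [angle_comm x₁ x₂ q, angle_comm x₂ q x₁] at hsum
  -- set up vectors
  set u : EuclideanSpace ℝ (Fin 3) := x₁ - q with hu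
  set v : EuclideanSpace ℝ (Fin 3) := x₂ - q with hv
  have hang1 : ∠ q x₁ x₂ = InnerProductGeometry.angle (-u) (v - u) := by
    rw [angle, hu, hv]
    congr 1 <;> simp [vsub_eq_sub]
  have hang2 : ∠ q x₂ x₁ = InnerProductGeometry.angle (-v) (u - v) := by
    rw [angle, hu, hv]
    congr 1 <;> simp [vsub_eq_sub]
  have hang0 : ∠ x₁ q x₂ = InnerProductGeometry.angle u v := by
    rw [angle, hu, hv]; congr 1
  have hd1 : dist x₁ q = ‖u‖ := by rw [dist_eq_norm]
  have hd2 : dist q x₂ = ‖v‖ := by rw [dist_comm, dist_eq_norm]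
  have hd3 : dist x₁ x₂ = ‖v - u‖ := by rw [dist_comm, dist_eq_norm, hu, hv]; congr 1; abel
  have E1 := key_area u v
  have E2 := key_area v u
  rw [InnerProductGeometry.angle_comm v u] at E2
  rw [← hang0, ← hang1] at E1
  rw [← hang0, ← hang2] at E2
  -- norms positive
  have hu0 : 0 < ‖u‖ := by rw [← hd1, dist_pos]; exact hne1
  have hv0 : 0 < ‖v‖ := by rw [← hd2, dist_pos]; exact hne2.symm
  have ha0 : 0 < ‖v - u‖ := by
    rw [← hd3, dist_pos]; intro he; apply h; rw [he]
    simpa [Set.pair_comm] using collinear_pair ℝ q x₂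
  have huv : ‖u - v‖ = ‖v - u‖ := by rw [← neg_sub, norm_neg]
  rw [huv] at E2
  -- law of sines relations
  have L1 : Real.sin (∠ q x₁ x₂) * ‖v - u‖ = Real.sin (∠ x₁ q x₂) * ‖v‖ :=
    mul_left_cancel₀ hu0.ne' (by linear_combination E1)
  have L2 : Real.sin (∠ q x₂ x₁) * ‖v - u‖ = Real.sin (∠ x₁ q x₂) * ‖u‖ :=
    mul_left_cancel₀ hv0.ne' (by linear_combination E2)
  have htrig := trig_aux (∠ x₁ q x₂) (∠ q x₁ x₂) (∠ q x₂ x₁) (by linarith) hθ0 hθπ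
  rw [hd1, hd2, hd3]
  have : (Real.sin (∠ q x₁ x₂) + Real.sin (∠ q x₂ x₁)) * ‖v - u‖ =
      Real.sin (∠ x₁ q x₂) * (‖u‖ + ‖v‖) := by linarith [L1, L2]
  rw [htrig] at this
  have hfin : Real.sin (∠ x₁ q x₂) * ((1 + 2 * Real.sin (∠ q x₁ x₂ / 2) * Real.sin (∠ q x₂ x₁ / 2) /
        Real.sin (∠ x₁ q x₂ / 2)) * ‖v - u‖) = Real.sin (∠ x₁ q x₂) * (‖u‖ + ‖v‖) := by
    rw [← this]; ring
  have := mul_left_cancel₀ (ne_of_gt hsθ) hfin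
  exact this.symm
end

section
/- Let a triangle have vertices x₁, x₂, q with angles θ₁ at x₁, θ₂ at x₂, and θ at q, where θ₁ + θ₂ + θ = π. If max(θ₁, θ₂) ≤ arcsin(√(ε/2)) for some ε ∈ (0,1], then |x₁ - q| + |q - x₂| ≤ (1 + ε/2)·|x₁ - x₂|. -/
open EuclideanGeometry

/-- If in a nondegenerate triangle `x₁ x₂ q` the angles at `x₁` and at `x₂` are both at most
`arcsin √(ε/2)` for some `ε ∈ (0,1]`, then
`|x₁ - q| + |q - x₂| ≤ (1 + ε/2)·|x₁ - x₂|`. -/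
theorem stmt_8 (x₁ x₂ q : EuclideanSpace ℝ (Fin 3)) (ε : ℝ) (hε : ε ∈ Set.Ioc 0 1)
    (h : ¬ Collinear ℝ ({x₁, x₂, q} : Set (EuclideanSpace ℝ (Fin 3))))
    (hangle : max (∠ q x₁ x₂) (∠ q x₂ x₁) ≤ Real.arcsin (Real.sqrt (ε / 2))) :
    dist x₁ q + dist q x₂ ≤ (1 + ε / 2) * dist x₁ x₂ := by
  obtain ⟨hε0, hε1⟩ := hε
  have hne : x₁ ≠ x₂ := by
    rintro rfl
    exact h (by simpa using collinear_pair ℝ x₁ q)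
  set a := dist x₁ q with ha
  set b := dist q x₂ with hb
  set c := dist x₁ x₂ with hc
  have hcpos : 0 < c := dist_pos.mpr hne
  set θ₁ := ∠ q x₁ x₂ with hθ₁
  set θ₂ := ∠ q x₂ x₁ with hθ₂
  -- key projection identity: a * cos θ₁ + b * cos θ₂ = c
  have key : a * Real.cos θ₁ + b * Real.cos θ₂ = c := by
    have h1 : Real.cos θ₁ * (‖q - x₁‖ * ‖x₂ - x₁‖) = inner ℝ (q - x₁) (x₂ - x₁) :=
      InnerProductGeometry.cos_angle_mul_norm_mul_norm _ _
    have h2 : Real.cos θ₂ * (‖q - x₂‖ * ‖x₁ - x₂‖) = inner ℝ (q - x₂) (x₁ - x₂) :=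
      InnerProductGeometry.cos_angle_mul_norm_mul_norm _ _
    have hcne : c ≠ 0 := ne_of_gt hcpos
    have hac : a = ‖q - x₁‖ := by rw [ha, dist_comm, dist_eq_norm]
    have hbc : b = ‖q - x₂‖ := by rw [hb, dist_eq_norm]
    have hcc : c = ‖x₂ - x₁‖ := by rw [hc, dist_comm, dist_eq_norm]
    have hcc' : c = ‖x₁ - x₂‖ := by rw [hc, dist_eq_norm]
    have hinner : (inner ℝ (q - x₁) (x₂ - x₁) : ℝ) + inner ℝ (q - x₂) (x₁ - x₂) = c ^ 2 := by
      rw [show x₁ - x₂ = -(x₂ - x₁) from (neg_sub _ _).symm, inner_neg_right,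
        ← sub_eq_add_neg, ← inner_sub_left,
        show (q - x₁) - (q - x₂) = x₂ - x₁ by abel,
        real_inner_self_eq_norm_sq, ← hcc]
    have : a * Real.cos θ₁ * c + b * Real.cos θ₂ * c = c * c := by
      have e1 : a * Real.cos θ₁ * c = inner ℝ (q - x₁) (x₂ - x₁) := by
        rw [hac, hcc]; rw [← h1]; ring
      have e2 : b * Real.cos θ₂ * c = inner ℝ (q - x₂) (x₁ - x₂) := by
        rw [hbc, hcc']; rw [← h2]; ring
      rw [e1, e2, hinner]; ring
    field_simp at this
    nlinarith [this]
  set m := Real.sqrt (1 - ε / 2) with hm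
  have hm0 : 0 ≤ m := Real.sqrt_nonneg _
  have hmsq : m ^ 2 = 1 - ε / 2 := Real.sq_sqrt (by linarith)
  have hcos : Real.cos (Real.arcsin (Real.sqrt (ε / 2))) = m := by
    rw [Real.cos_arcsin, Real.sq_sqrt (by linarith : (0:ℝ) ≤ ε / 2)]
  have hcos1 : m ≤ Real.cos θ₁ := by
    rw [← hcos]
    exact Real.cos_le_cos_of_nonneg_of_le_pi (angle_nonneg _ _ _)
      (le_trans (Real.arcsin_le_pi_div_two _) (by linarith [Real.pi_pos]))
      (le_trans (le_max_left _ _) hangle)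
  have hcos2 : m ≤ Real.cos θ₂ := by
    rw [← hcos]
    exact Real.cos_le_cos_of_nonneg_of_le_pi (angle_nonneg _ _ _)
      (le_trans (Real.arcsin_le_pi_div_two _) (by linarith [Real.pi_pos]))
      (le_trans (le_max_right _ _) hangle)
  have ha0 : 0 ≤ a := dist_nonneg
  have hb0 : 0 ≤ b := dist_nonneg
  have hstep : m * (a + b) ≤ c := by
    calc m * (a + b) = a * m + b * m := by ring
      _ ≤ a * Real.cos θ₁ + b * Real.cos θ₂ :=
          add_le_add (mul_le_mul_of_nonneg_left hcos1 ha0) (mul_le_mul_of_nonneg_left hcos2 hb0)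
      _ = c := key
  have hm1 : 1 ≤ m * (1 + ε / 2) := by
    have ht2 : 1 ≤ (m * (1 + ε / 2)) ^ 2 := by
      have : (m * (1 + ε / 2)) ^ 2 = (1 - ε / 2) * (1 + ε / 2) ^ 2 := by rw [mul_pow, hmsq]
      rw [this]
      nlinarith [mul_nonneg hε0.le (show (0:ℝ) ≤ 1 - ε by linarith),
        mul_nonneg (mul_nonneg hε0.le hε0.le) (show (0:ℝ) ≤ 1 - ε by linarith)]
    nlinarith [ht2, mul_nonneg hm0 (show (0:ℝ) ≤ 1 + ε / 2 by linarith)]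
  calc a + b = 1 * (a + b) := by ring
    _ ≤ (m * (1 + ε / 2)) * (a + b) := by
        apply mul_le_mul_of_nonneg_right hm1 (by linarith)
    _ = (1 + ε / 2) * (m * (a + b)) := by ring
    _ ≤ (1 + ε / 2) * c := by
        apply mul_le_mul_of_nonneg_left hstep (by linarith)
end

section
/- Let h > 0, r > 0 with r ≤ h, ε ∈ (0,1], γ ∈ (0,π), and λ = (1 + √(ε/8)·sin(γ/2))⁻¹. Define i₁ to be the smallest positive integer such that h·λ^{i₁} < ε·r. Then i₁ - 1 = ⌊log_λ(ε·r/h)⌋, and i₁ - 1 ≤ (3.44/(√ε·sin(γ/2)))·ln(h/(ε·r)) + 1. In particular, the number of Steiner-point levels is O((1/√ε)·log(1/ε)·log(h/r)) as ε → 0. -/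
/-- For `0 ≤ x < 1`, `exp x ≤ (1 - x)⁻¹`. -/
lemma aux_exp_le_inv_one_sub {x : ℝ} (h0 : 0 ≤ x) (h1 : x < 1) :
    Real.exp x ≤ (1 - x)⁻¹ := by
  have h2 : 0 < 1 - x := by linarith
  have h3 := Real.add_one_le_exp (-x)
  rw [Real.exp_neg] at h3
  have h4 : 1 - x ≤ (Real.exp x)⁻¹ := by linarith
  have h5 : 0 < Real.exp x := Real.exp_pos x
  calc Real.exp x = ((Real.exp x)⁻¹)⁻¹ := by rw [inv_inv]
    _ ≤ (1 - x)⁻¹ := by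
        apply inv_anti₀ h2 h4

/-- Numeric bound: `25/86 ≤ log (1 + 1/√8)`. -/
lemma aux_log_num : (25/86 : ℝ) ≤ Real.log (1 + (Real.sqrt 8)⁻¹) := by
  have hs8 : (0:ℝ) < Real.sqrt 8 := Real.sqrt_pos.2 (by norm_num)
  have hsq : Real.sqrt 8 ^ 2 = 8 := Real.sq_sqrt (by norm_num)
  have hub : Real.sqrt 8 ≤ 2.8285 := by nlinarith
  have hlb : (0.3535 : ℝ) ≤ (Real.sqrt 8)⁻¹ := by
    rw [le_inv_comm₀ (by norm_num) hs8]
    calc Real.sqrt 8 ≤ 2.8285 := hub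
      _ ≤ (0.3535 : ℝ)⁻¹ := by norm_num
  have h1 : (0:ℝ) < 1 + (Real.sqrt 8)⁻¹ := by positivity
  rw [Real.le_log_iff_exp_le h1]
  have e1 : Real.exp (25/86 : ℝ) = Real.exp (25/688) ^ 8 := by
    rw [← Real.exp_nat_mul]; norm_num
  have e2 : Real.exp (25/688 : ℝ) ≤ 688/663 := by
    have := aux_exp_le_inv_one_sub (x := 25/688) (by norm_num) (by norm_num)
    convert this using 1
    norm_num
  calc Real.exp (25/86:ℝ) = Real.exp (25/688) ^ 8 := e1
    _ ≤ (688/663)^8 := by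
        exact pow_le_pow_left₀ (Real.exp_nonneg _) e2 8
    _ ≤ 1 + 0.3535 := by norm_num
    _ ≤ 1 + (Real.sqrt 8)⁻¹ := by linarith

/-- Chord inequality for the concave `log` on `[1, 1 + 1/√8]`. -/
lemma aux_chord {s : ℝ} (hs0 : 0 ≤ s) (hsc : s ≤ (Real.sqrt 8)⁻¹) :
    Real.sqrt 8 * s * Real.log (1 + (Real.sqrt 8)⁻¹) ≤ Real.log (1 + s) := by
  set c : ℝ := (Real.sqrt 8)⁻¹ with hc_def
  have hs8 : (0:ℝ) < Real.sqrt 8 := Real.sqrt_pos.2 (by norm_num)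
  have hc : 0 < c := by positivity
  have hconc := strictConcaveOn_log_Ioi.concaveOn
  have hx : (1:ℝ) ∈ Set.Ioi (0:ℝ) := by norm_num
  have hy : (1 + c) ∈ Set.Ioi (0:ℝ) := by simp only [Set.mem_Ioi]; linarith
  have ha : (0:ℝ) ≤ 1 - s / c := by
    have : s / c ≤ 1 := (div_le_one hc).2 hsc
    linarith
  have hb : (0:ℝ) ≤ s / c := by positivity
  have hab : (1 - s/c) + s/c = 1 := by ring
  have key := hconc.2 hx hy ha hb hab
  have harg : (1 - s/c) • (1:ℝ) + (s/c) • (1 + c) = 1 + s := by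
    field_simp
    linear_combination (s + 1) * mul_inv_cancel₀ hc.ne'
  rw [harg] at key
  have hlog1 : Real.log 1 = 0 := Real.log_one
  rw [smul_eq_mul, smul_eq_mul, hlog1, mul_zero, zero_add] at key
  have hsc8 : s / c = Real.sqrt 8 * s := by
    rw [hc_def, div_eq_mul_inv, inv_inv, mul_comm]
  rw [hsc8] at key
  exact key

/-- If `i₁` is the smallest positive integer with `h·λ^{i₁} < ε·r`, where
`λ = (1 + √(ε/8)·sin(γ/2))⁻¹`, then `i₁ - 1 = ⌊log_λ(ε·r/h)⌋` and
`i₁ - 1 ≤ (3.44/(√ε·sin(γ/2)))·ln(h/(ε·r)) + 1`. -/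
theorem stmt_10 (h r γ ε : ℝ) (i₁ : ℕ)
    (hh : 0 < h) (hr : 0 < r) (hrh : r ≤ h) (hε : ε ∈ Set.Ioc 0 1)
    (hγ : γ ∈ Set.Ioo 0 Real.pi) (hpos : 0 < i₁)
    (hlt : h * ((1 + Real.sqrt (ε / 8) * Real.sin (γ / 2))⁻¹) ^ i₁ < ε * r)
    (hmin : ∀ j : ℕ, 0 < j →
      h * ((1 + Real.sqrt (ε / 8) * Real.sin (γ / 2))⁻¹) ^ j < ε * r → i₁ ≤ j) :
    (i₁ : ℤ) - 1 =
      ⌊Real.logb ((1 + Real.sqrt (ε / 8) * Real.sin (γ / 2))⁻¹) (ε * r / h)⌋ ∧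
    (i₁ : ℝ) - 1 ≤
      3.44 / (Real.sqrt ε * Real.sin (γ / 2)) * Real.log (h / (ε * r)) + 1 := by
  obtain ⟨hε0, hε1⟩ := hε
  obtain ⟨hγ0, hγπ⟩ := hγ
  set s : ℝ := Real.sqrt (ε / 8) * Real.sin (γ / 2) with hs_def
  have hsin : 0 < Real.sin (γ / 2) := by
    apply Real.sin_pos_of_pos_of_lt_pi (by linarith)
    linarith [Real.pi_pos]
  have hsin1 : Real.sin (γ / 2) ≤ 1 := Real.sin_le_one _
  have hsqε : 0 < Real.sqrt (ε / 8) := Real.sqrt_pos.2 (by linarith)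
  have hs : 0 < s := mul_pos hsqε hsin
  have h1s : (1:ℝ) < 1 + s := by linarith
  have h1s0 : (0:ℝ) < 1 + s := by linarith
  have hlog1s : 0 < Real.log (1 + s) := Real.log_pos h1s
  have hεr : 0 < ε * r := mul_pos hε0 hr
  have hεrh : ε * r ≤ h := by nlinarith
  set L : ℝ := (Real.log h - Real.log (ε * r)) / Real.log (1 + s) with hL_def
  -- key equivalence
  have key : ∀ j : ℕ, (h * ((1 + s)⁻¹) ^ j < ε * r ↔ L < j) := by
    intro j
    have hpow : (0:ℝ) < (1 + s) ^ j := pow_pos h1s0 j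
    rw [inv_pow, mul_inv_lt_iff₀ hpow]  -- may need adjusting
    rw [hL_def, div_lt_iff₀ hlog1s]
    constructor
    · intro hj
      have := Real.log_lt_log hh hj
      rw [Real.log_mul hεr.ne' hpow.ne', Real.log_pow] at this
      push_cast at this ⊢
      linarith
    · intro hj
      have h2 : Real.log h < Real.log (ε * r * (1 + s) ^ j) := by
        rw [Real.log_mul hεr.ne' hpow.ne', Real.log_pow]
        push_cast at hj ⊢
        linarith
      have := Real.exp_lt_exp.2 h2
      rw [Real.exp_log hh, Real.exp_log (by positivity)] at this
      linarith [this]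
  have hLlt : L < (i₁ : ℝ) := (key i₁).1 hlt
  have hfloor : ⌊L⌋ < (i₁ : ℤ) := Int.floor_lt.2 (by exact_mod_cast hLlt)
  have hL0 : 0 ≤ L := by
    apply div_nonneg _ hlog1s.le
    have := Real.log_le_log hεr hεrh
    linarith
  have hfl0 : 0 ≤ ⌊L⌋ := Int.floor_nonneg.2 hL0
  -- minimality gives i₁ ≤ ⌊L⌋ + 1
  have hub : (i₁ : ℤ) ≤ ⌊L⌋ + 1 := by
    have hj : L < ((⌊L⌋.toNat + 1 : ℕ) : ℝ) := by
      have h1 : (⌊L⌋.toNat : ℤ) = ⌊L⌋ := Int.toNat_of_nonneg hfl0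
      have h2 : ((⌊L⌋.toNat : ℕ) : ℝ) = (⌊L⌋ : ℝ) := by
        exact_mod_cast congrArg (Int.cast : ℤ → ℝ) h1
      have hcast : ((⌊L⌋.toNat + 1 : ℕ) : ℝ) = (⌊L⌋ : ℝ) + 1 := by
        push_cast
        rw [h2]
      rw [hcast]
      exact Int.lt_floor_add_one L
    have := hmin (⌊L⌋.toNat + 1) (Nat.succ_pos _) ((key _).2 hj)
    omega
  have hi₁ : (i₁ : ℤ) - 1 = ⌊L⌋ := by omega
  have hlogb : Real.logb (1 + s)⁻¹ (ε * r / h) = L := by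
    rw [Real.logb, Real.log_inv, Real.log_div hεr.ne' hh.ne', hL_def]
    rw [div_neg, ← neg_div, neg_sub]
  constructor
  · rw [hlogb]; exact hi₁
  · have hfloorL : ((⌊L⌋ : ℝ)) ≤ L := Int.floor_le L
    have hi₁R : (i₁ : ℝ) - 1 = (⌊L⌋ : ℝ) := by exact_mod_cast congrArg (Int.cast : ℤ → ℝ) hi₁
    set t : ℝ := Real.sqrt ε * Real.sin (γ / 2) with ht_def
    have ht : 0 < t := mul_pos (Real.sqrt_pos.2 hε0) hsin
    have hs8 : (0:ℝ) < Real.sqrt 8 := Real.sqrt_pos.2 (by norm_num)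
    have hts : t = Real.sqrt 8 * s := by
      rw [ht_def, hs_def]
      rw [show ε = 8 * (ε / 8) by ring, Real.sqrt_mul (by norm_num)]
      ring_nf
    have hsc : s ≤ (Real.sqrt 8)⁻¹ := by
      have h1 : Real.sqrt (ε / 8) ≤ Real.sqrt (1 / 8) := Real.sqrt_le_sqrt (by linarith)
      have h2 : Real.sqrt (1 / 8) = (Real.sqrt 8)⁻¹ := by
        rw [one_div, Real.sqrt_inv]
      calc s ≤ Real.sqrt (ε / 8) * 1 := by
              apply mul_le_mul_of_nonneg_left hsin1 hsqε.le
        _ = Real.sqrt (ε / 8) := mul_one _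
        _ ≤ (Real.sqrt 8)⁻¹ := by rw [← h2]; exact h1
    have keyineq : t ≤ 3.44 * Real.log (1 + s) := by
      have hch := aux_chord hs.le hsc
      have hnum := aux_log_num
      have : Real.sqrt 8 * s * (25/86) ≤ Real.sqrt 8 * s * Real.log (1 + (Real.sqrt 8)⁻¹) := by
        apply mul_le_mul_of_nonneg_left hnum (by positivity)
      rw [hts]
      nlinarith
    have hD : 0 ≤ Real.log h - Real.log (ε * r) := by
      have := Real.log_le_log hεr hεrh
      linarith
    have hmain : L ≤ 3.44 / t * (Real.log h - Real.log (ε * r)) := by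
      rw [hL_def, show (3.44 / t * (Real.log h - Real.log (ε*r))) =
        (3.44 * (Real.log h - Real.log (ε*r))) / t by ring,
        div_le_div_iff₀ hlog1s ht]
      nlinarith [mul_le_mul_of_nonneg_left keyineq hD]
    rw [Real.log_div hh.ne' hεr.ne']
    calc (i₁ : ℝ) - 1 = (⌊L⌋ : ℝ) := hi₁R
      _ ≤ L := hfloorL
      _ ≤ 3.44 / t * (Real.log h - Real.log (ε * r)) := hmain
      _ ≤ 3.44 / t * (Real.log h - Real.log (ε * r)) + 1 := by linarith
end
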